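/- (Lemma 5.6) Let f : ℝ^n → ℝ be differentiable, convex, coordinate-wise smooth with parameters (L_1,…,L_n) (each L_i > 0), and σ_β-strongly convex with respect to ‖·‖_{L_β} for some β ∈ [0,1] and σ_β > 0. Let x* be a minimizer of f. Set α := (1−β)/2, S_α := Σ_i L_i^α, p_i := L_i^α/S_α. Fix τ ∈ (0,1], set η := 1/(τ·S_α²), fix y_k, z_k ∈ ℝ^n and let x_{k+1} := τ·z_k + (1−τ)·y_k. For each i define y^{(i)} := x_{k+1} − (1/L_i)·∇_i f(x_{k+1})·e_i and z^{(i)} := (1/(1+ησ_β))·(z_k + ησ_β·x_{k+1} − (η/(p_i·L_i^β))·∇_i f(x_{k+1})·e_i). Then: 0 ≤ ((1−τ)η/τ)·(f(y_k) − f(x*)) − (η/τ)·Σ_{i=1}^n p_i·(f(y^{(i)}) − f(x*)) + (1/2)‖z_k − x*‖²_{L_β} − ((1+ησ_β)/2)·Σ_{i=1}^n p_i·‖z^{(i)} − x*‖²_{L_β}. -/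

import Mathlib

/-- The i-th standard basis vector of ℝ^n. -/
def basisVec {n : ℕ} (i : Fin n) : Fin n → ℝ := Pi.single i 1

/-- The i-th partial derivative ∇_i f(x). -/
noncomputable def coordGrad {n : ℕ} (f : (Fin n → ℝ) → ℝ) (x : Fin n → ℝ) (i : Fin n) : ℝ :=
  fderiv ℝ f x (basisVec i)

/-- f is coordinate-wise smooth with parameters (L_1, …, L_n):
`|∇_i f(x + δ e_i) − ∇_i f(x)| ≤ L_i |δ|` for all x, δ, i. -/
def CoordSmooth {n : ℕ} (f : (Fin n → ℝ) → ℝ) (L : Fin n → ℝ) : Prop :=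
  ∀ (x : Fin n → ℝ) (δ : ℝ) (i : Fin n),
    |coordGrad f (x + δ • basisVec i) i - coordGrad f x i| ≤ L i * |δ|

/-- Weighted squared norm ‖v‖²_{L_β} := Σ_i L_i^β · v_i². -/
noncomputable def wnormSq {n : ℕ} (L : Fin n → ℝ) (β : ℝ) (v : Fin n → ℝ) : ℝ :=
  ∑ i, L i ^ β * v i ^ 2

/-- f is σ-strongly convex with respect to the weighted norm ‖·‖_{L_β}:
`f(y) ≥ f(x) + ⟨∇f(x), y − x⟩ + (σ/2)‖y − x‖²_{L_β}` for all x, y. -/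
def StronglyConvexW {n : ℕ} (f : (Fin n → ℝ) → ℝ) (L : Fin n → ℝ) (β σ : ℝ) : Prop :=
  ∀ x y : Fin n → ℝ,
    f x + (∑ i, coordGrad f x i * (y i - x i)) + σ / 2 * wnormSq L β (y - x) ≤ f y

lemma quad_ub (g g' : ℝ → ℝ) (hd : ∀ t, HasDerivAt g (g' t) t) (L : ℝ)
    (hLip : ∀ t, |g' t - g' 0| ≤ L * |t|) (δ : ℝ) :
    g δ ≤ g 0 + g' 0 * δ + L / 2 * δ ^ 2 := by
  set h : ℝ → ℝ := fun t => g t - g' 0 * t - L / 2 * t ^ 2 with hh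
  have hd' : ∀ t, HasDerivAt h (g' t - g' 0 - L * t) t := by
    intro t
    have := ((hd t).sub (((hasDerivAt_id t).const_mul (g' 0)))).sub
      (((hasDerivAt_pow 2 t).const_mul (L / 2)))
    exact this.congr_deriv (by push_cast; ring)
  have hcont : ∀ s : Set ℝ, ContinuousOn h s := fun s =>
    (fun t _ => ((hd' t).continuousAt.continuousWithinAt))
  have key : h δ ≤ h 0 := by
    rcases lt_trichotomy δ 0 with hlt | heq | hgt
    · obtain ⟨c, hc, hslope⟩ := exists_hasDerivAt_eq_slope h (fun t => g' t - g' 0 - L * t) hlt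
        (hcont _) (fun x _ => hd' x)
      have h1 := hLip c
      have hc2 := hc.2
      have habs : |c| = -c := abs_of_neg hc2
      rw [habs] at h1
      have h2 := (abs_le.mp h1).1
      have hge : 0 ≤ g' c - g' 0 - L * c := by linarith
      rw [eq_div_iff (by linarith : (0:ℝ) - δ ≠ 0)] at hslope
      nlinarith
    · simp [heq]
    · obtain ⟨c, hc, hslope⟩ := exists_hasDerivAt_eq_slope h (fun t => g' t - g' 0 - L * t)
        hgt (hcont _) (fun x _ => hd' x)
      have h1 := hLip c
      have hc1 := hc.1
      have habs : |c| = c := abs_of_pos hc1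
      rw [habs] at h1
      have h2 := (abs_le.mp h1).2
      have hle : g' c - g' 0 - L * c ≤ 0 := by linarith
      rw [eq_div_iff (by linarith : δ - 0 ≠ 0)] at hslope
      nlinarith
  have h2 : g δ - g' 0 * δ - L / 2 * δ ^ 2 ≤ g 0 - g' 0 * 0 - L / 2 * 0 ^ 2 := key
  nlinarith [h2]

lemma coord_smooth_ub {n : ℕ} (f : (Fin n → ℝ) → ℝ) (L : Fin n → ℝ)
    (hf : Differentiable ℝ f) (hsmooth : CoordSmooth f L) (x : Fin n → ℝ) (i : Fin n) (δ : ℝ) :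
    f (x + δ • basisVec i) ≤ f x + coordGrad f x i * δ + L i / 2 * δ ^ 2 := by
  set g : ℝ → ℝ := fun t => f (x + t • basisVec i) with hg
  have hd : ∀ t, HasDerivAt g (coordGrad f (x + t • basisVec i) i) t := by
    intro t
    have h1 : HasDerivAt (fun t : ℝ => x + t • basisVec i) (basisVec i) t := by
      simpa using ((hasDerivAt_id t).smul_const (basisVec i)).const_add x
    exact (hf (x + t • basisVec i)).hasFDerivAt.comp_hasDerivAt t h1
  have hLip : ∀ t : ℝ, |coordGrad f (x + t • basisVec i) i
      - coordGrad f (x + (0:ℝ) • basisVec i) i| ≤ L i * |t| := by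
    intro t
    simp only [zero_smul, add_zero]
    exact hsmooth x t i
  have h := quad_ub g (fun t => coordGrad f (x + t • basisVec i) i) hd (L i) hLip δ
  simp only [hg, zero_smul, add_zero] at h
  exact h


lemma coord_ineq (a b c s Lb w : ℝ) (hs : 0 ≤ s) (hLb : 0 < Lb) (hw : (1+s) * w = a + s*b - c) :
    c * Lb * a + (1+s)/2 * (Lb * w^2) ≤ c^2 * Lb / 2 + 1/2 * (Lb * a^2) + s/2 * (Lb * b^2) := by
  have h1s : (0:ℝ) < 1 + s := by linarith
  have hw2 : (1+s)^2 * w^2 = (a + s*b - c)^2 := by rw [← mul_pow, hw]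
  have hw3 : Lb * ((1+s)^2 * w^2) = Lb * ((a + s*b - c)^2) := by rw [hw2]
  have key : 0 ≤ Lb * (s * (a - b - c)^2) := by positivity
  nlinarith [hw3, key, h1s, hLb]


lemma assemble (η τ σβ s W1 W2 ST G1 A1 B1 PFY X1 X2 X3 : ℝ)
    (hη0 : 0 < η) (hτ0 : 0 < τ) (hτ1 : τ ≤ 1) (hs : s = η * σβ)
    (main : η * G1 + (1 + s) / 2 * ST ≤ η / τ * X3 - η / τ * PFY + (1 / 2 * W1 + s / 2 * W2))
    (hG : G1 = (1 - τ) / τ * A1 + B1)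
    (hA : X3 - X1 ≤ A1) (hB : X3 - X2 + σβ / 2 * W2 ≤ B1) :
    0 ≤ (1 - τ) * η / τ * (X1 - X2) - η / τ * (PFY - X2) + 1 / 2 * W1 - (1 + s) / 2 * ST := by
  have hcA : (0:ℝ) ≤ η * ((1 - τ) / τ) := mul_nonneg hη0.le (div_nonneg (by linarith) hτ0.le)
  have E3 := mul_le_mul_of_nonneg_left hA hcA
  have E4 := mul_le_mul_of_nonneg_left hB hη0.le
  have E2 : η * G1 = η * ((1 - τ) / τ) * A1 + η * B1 := by rw [hG]; ring
  have Eid : ∀ r : ℝ, η * ((1 - τ) / τ) * r + η * r = η / τ * r := fun r => by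
    field_simp; ring
  have hsW : η * (σβ / 2 * W2) = s / 2 * W2 := by rw [hs]; ring
  have hgc : (1 - τ) * η / τ * (X1 - X2)
      = η * ((1 - τ) / τ) * X1 - η * ((1 - τ) / τ) * X2 := by ring
  rw [hgc]
  linarith [main, E2, E3, E4, hsW, Eid X3, Eid X2]

set_option maxHeartbeats 1000000 in
/-- Lemma 5.6: the per-iteration inequality of NU_ACDM against the minimizer `x*`. -/
theorem stmt_5 (n : ℕ) (f : (Fin n → ℝ) → ℝ) (L : Fin n → ℝ)
    (hf : Differentiable ℝ f) (hconv : ConvexOn ℝ Set.univ f) (hL : ∀ i, 0 < L i)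
    (hsmooth : CoordSmooth f L)
    (β σβ : ℝ) (hβ : β ∈ Set.Icc (0 : ℝ) 1) (hσ : 0 < σβ)
    (hsc : StronglyConvexW f L β σβ)
    (xstar : Fin n → ℝ) (hxstar : ∀ v, f xstar ≤ f v)
    (α Sα : ℝ) (hα : α = (1 - β) / 2) (hS : Sα = ∑ i, L i ^ α)
    (p : Fin n → ℝ) (hp : ∀ i, p i = L i ^ α / Sα)
    (τ η : ℝ) (hτ0 : 0 < τ) (hτ1 : τ ≤ 1) (hη : η = 1 / (τ * Sα ^ 2))
    (yk zk xk1 : Fin n → ℝ) (hx : xk1 = τ • zk + (1 - τ) • yk)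
    (Y Z : Fin n → Fin n → ℝ)
    (hY : ∀ i, Y i = xk1 - (1 / L i * coordGrad f xk1 i) • basisVec i)
    (hZ : ∀ i, Z i = (1 / (1 + η * σβ)) •
      (zk + (η * σβ) • xk1 - (η / (p i * L i ^ β) * coordGrad f xk1 i) • basisVec i)) :
    0 ≤ (1 - τ) * η / τ * (f yk - f xstar)
        - η / τ * ∑ i, p i * (f (Y i) - f xstar)
        + (1 / 2) * wnormSq L β (zk - xstar)
        - (1 + η * σβ) / 2 * ∑ i, p i * wnormSq L β (Z i - xstar) := by
  rcases Nat.eq_zero_or_pos n with hn | hn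
  · subst hn
    have h1 : yk = xstar := Subsingleton.elim _ _
    simp [wnormSq, h1]
  -- nontrivial case
  have hne : Nonempty (Fin n) := ⟨⟨0, hn⟩⟩
  have hLβ : ∀ i, (0:ℝ) < L i ^ β := fun i => Real.rpow_pos_of_pos (hL i) β
  have hLα : ∀ i, (0:ℝ) < L i ^ α := fun i => Real.rpow_pos_of_pos (hL i) α
  have hSpos : 0 < Sα := by
    rw [hS]; exact Finset.sum_pos (fun i _ => hLα i) Finset.univ_nonempty
  have hppos : ∀ i, 0 < p i := fun i => by rw [hp]; exact div_pos (hLα i) hSpos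
  have hη0 : 0 < η := by
    rw [hη]; exact div_pos one_pos (mul_pos hτ0 (pow_pos hSpos 2))
  set g : Fin n → ℝ := fun i => coordGrad f xk1 i with hg
  set s : ℝ := η * σβ with hsdef
  have hs0 : (0:ℝ) ≤ s := by positivity
  have h1s : (0:ℝ) < 1 + s := by linarith
  have hsum1 : ∑ i, p i = 1 := by
    simp only [hp, ← Finset.sum_div, ← hS]
    exact div_self hSpos.ne'
  -- smoothness descent
  have hdesc : ∀ i, g i ^ 2 ≤ 2 * L i * (f xk1 - f (Y i)) := by
    intro i
    have h1 : Y i = xk1 + (-(1 / L i * g i)) • basisVec i := by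
      rw [hY i, sub_eq_add_neg, ← neg_smul]
    have h2 := coord_smooth_ub f L hf hsmooth xk1 i (-(1 / L i * g i))
    rw [← h1] at h2
    have hLi := hL i
    have : f (Y i) ≤ f xk1 - g i ^ 2 / (2 * L i) := by
      have e : g i * (-(1 / L i * g i)) + L i / 2 * (-(1 / L i * g i)) ^ 2
          = - (g i ^ 2 / (2 * L i)) := by field_simp; ring
      nlinarith [h2, e]
    have h3 : 0 < 2 * L i := by linarith
    have h4 : g i ^ 2 / (2 * L i) ≤ f xk1 - f (Y i) := by linarith
    have h5 := (div_le_iff₀ h3).mp h4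
    nlinarith [h5]
  -- coordinates of Z
  have hZc : ∀ i j, (1 + s) * (Z i j) =
      zk j + s * xk1 j - (η / (p i * L i ^ β) * g i) * (if j = i then (1:ℝ) else 0) := by
    intro i j
    rw [hZ i]
    simp only [Pi.smul_apply, Pi.sub_apply, Pi.add_apply, smul_eq_mul, basisVec]
    rw [Pi.single_apply]
    field_simp
    simp only [hg]; ring
  -- per-coordinate main inequality
  have D0 : ∀ i, η / p i * g i * (zk i - xstar i) + (1 + s) / 2 * wnormSq L β (Z i - xstar)
      ≤ η ^ 2 * g i ^ 2 / (2 * p i ^ 2 * L i ^ β) + 1 / 2 * wnormSq L β (zk - xstar)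
        + s / 2 * wnormSq L β (xk1 - xstar) := by
    intro i
    have key : ∀ j : Fin n, (1 + s) / 2 * (L j ^ β * ((Z i - xstar) j) ^ 2)
        + (if j = i then η / p i * g i * (zk i - xstar i) else 0)
        ≤ (1 / 2 * (L j ^ β * ((zk - xstar) j) ^ 2)
            + s / 2 * (L j ^ β * ((xk1 - xstar) j) ^ 2))
          + (if j = i then η ^ 2 * g i ^ 2 / (2 * p i ^ 2 * L i ^ β) else 0) := by
      intro j
      have hzc := hZc i j
      by_cases hji : j = i
      · subst hji
        simp only [eq_self_iff_true, if_true, Pi.sub_apply] at hzc ⊢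
        set c : ℝ := η / (p j * L j ^ β) * g j with hc
        have hw : (1 + s) * (Z j j - xstar j) = (zk j - xstar j) + s * (xk1 j - xstar j) - c := by
          rw [mul_sub, hzc]; ring
        have e1 : η / p j * g j * (zk j - xstar j) = c * L j ^ β * (zk j - xstar j) := by
          rw [hc]; field_simp [(hppos j).ne', (hLβ j).ne']
        have e2 : η ^ 2 * g j ^ 2 / (2 * p j ^ 2 * L j ^ β) = c ^ 2 * L j ^ β / 2 := by
          rw [hc]; field_simp [(hppos j).ne', (hLβ j).ne']
        rw [e1, e2]
        have hci := coord_ineq (zk j - xstar j) (xk1 j - xstar j) c s (L j ^ β)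
          (Z j j - xstar j) hs0 (hLβ j) hw
        linarith
      · simp only [if_neg hji, Pi.sub_apply, add_zero]
        rw [if_neg hji] at hzc
        have hw : (1 + s) * (Z i j - xstar j)
            = (zk j - xstar j) + s * (xk1 j - xstar j) - 0 := by
          rw [mul_sub, hzc]; ring
        have hci := coord_ineq (zk j - xstar j) (xk1 j - xstar j) 0 s (L j ^ β)
          (Z i j - xstar j) hs0 (hLβ j) hw
        nlinarith [hci]
    have hsumle := Finset.sum_le_sum (fun j (_ : j ∈ Finset.univ) => key j)
    rw [Finset.sum_add_distrib, Finset.sum_add_distrib, Finset.sum_add_distrib] at hsumle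
    simp only [Finset.sum_ite_eq', Finset.mem_univ, if_true] at hsumle
    rw [← Finset.mul_sum, ← Finset.mul_sum, ← Finset.mul_sum] at hsumle
    simp only [wnormSq]
    linarith [hsumle]
  -- identities for the coefficient computation
  have hLpow : ∀ i, L i ^ ((1:ℝ) - β) = (L i ^ α) ^ 2 := by
    intro i
    rw [show (1:ℝ) - β = α * 2 by rw [hα]; ring, Real.rpow_mul (hL i).le,
      show ((2:ℝ)) = ((2:ℕ):ℝ) by norm_num, Real.rpow_natCast]
  have hLsplit : ∀ i, L i ^ β * (L i ^ α) ^ 2 = L i := by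
    intro i
    rw [← hLpow i, ← Real.rpow_add (hL i), show β + (1 - β) = (1:ℝ) by ring, Real.rpow_one]
  have hcoef : ∀ i, η ^ 2 / (2 * p i * L i ^ β) * (2 * L i) = η / τ * p i := by
    intro i
    have hc1 := hLsplit i
    rw [hp i, hη]
    set A := L i ^ α with hAdef
    set B := L i ^ β with hBdef
    have hA0 : A ≠ 0 := (hLα i).ne'
    have hB0 : B ≠ 0 := (hLβ i).ne'
    rw [← hc1]
    field_simp
  have hgbound : ∀ i, p i * (η ^ 2 * g i ^ 2 / (2 * p i ^ 2 * L i ^ β))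
      ≤ η / τ * (p i * (f xk1 - f (Y i))) := by
    intro i
    have h1 : p i * (η ^ 2 * g i ^ 2 / (2 * p i ^ 2 * L i ^ β))
        = η ^ 2 / (2 * p i * L i ^ β) * g i ^ 2 := by
      field_simp [(hppos i).ne', (hLβ i).ne']
    have h2 : (0:ℝ) ≤ η ^ 2 / (2 * p i * L i ^ β) :=
      le_of_lt (div_pos (pow_pos hη0 2) (mul_pos (mul_pos two_pos (hppos i)) (hLβ i)))
    have h3 := mul_le_mul_of_nonneg_left (hdesc i) h2
    have h4 : η ^ 2 / (2 * p i * L i ^ β) * (2 * L i * (f xk1 - f (Y i)))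
        = η / τ * (p i * (f xk1 - f (Y i))) := by
      rw [show η ^ 2 / (2 * p i * L i ^ β) * (2 * L i * (f xk1 - f (Y i)))
          = (η ^ 2 / (2 * p i * L i ^ β) * (2 * L i)) * (f xk1 - f (Y i)) by ring, hcoef i]
      ring
    rw [h4] at h3
    linarith [h1, h3]
  -- per-coordinate inequality multiplied by p i
  have D1 : ∀ i, η * (g i * (zk i - xstar i)) + (1 + s) / 2 * (p i * wnormSq L β (Z i - xstar))
      ≤ η / τ * (p i * f xk1) - η / τ * (p i * f (Y i))
        + (1 / 2 * wnormSq L β (zk - xstar) + s / 2 * wnormSq L β (xk1 - xstar)) * p i := by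
    intro i
    have h0 := mul_le_mul_of_nonneg_left (D0 i) (hppos i).le
    have e3 : p i * (η / p i * g i * (zk i - xstar i)) = η * (g i * (zk i - xstar i)) := by
      field_simp [(hppos i).ne']
    have e4 := hgbound i
    nlinarith [h0, e3, e4]
  -- sum over i
  have main := Finset.sum_le_sum (fun i (_ : i ∈ Finset.univ) => D1 i)
  have eL : ∑ i, (η * (g i * (zk i - xstar i)) + (1 + s) / 2 * (p i * wnormSq L β (Z i - xstar)))
      = η * (∑ i, g i * (zk i - xstar i))
        + (1 + s) / 2 * (∑ i, p i * wnormSq L β (Z i - xstar)) := by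
    rw [Finset.sum_add_distrib, Finset.mul_sum, Finset.mul_sum]
  have t1 : ∑ i, η / τ * (p i * f xk1) = η / τ * f xk1 := by
    rw [← Finset.mul_sum, ← Finset.sum_mul, hsum1, one_mul]
  have t2 : ∑ i : Fin n, (1 / 2 * wnormSq L β (zk - xstar)
        + s / 2 * wnormSq L β (xk1 - xstar)) * p i
      = 1 / 2 * wnormSq L β (zk - xstar) + s / 2 * wnormSq L β (xk1 - xstar) := by
    rw [← Finset.mul_sum, hsum1, mul_one]
  have eR : ∑ i, (η / τ * (p i * f xk1) - η / τ * (p i * f (Y i))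
        + (1 / 2 * wnormSq L β (zk - xstar) + s / 2 * wnormSq L β (xk1 - xstar)) * p i)
      = η / τ * f xk1 - η / τ * (∑ i, p i * f (Y i))
        + (1 / 2 * wnormSq L β (zk - xstar) + s / 2 * wnormSq L β (xk1 - xstar)) := by
    rw [Finset.sum_add_distrib, Finset.sum_sub_distrib, t1, t2, ← Finset.mul_sum]
  rw [eL, eR] at main
  -- decomposition of the gradient pairing
  have hGdec : ∑ i, g i * (zk i - xstar i)
      = (1 - τ) / τ * (∑ i, g i * (xk1 i - yk i)) + (∑ i, g i * (xk1 i - xstar i)) := by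
    rw [Finset.mul_sum, ← Finset.sum_add_distrib]
    apply Finset.sum_congr rfl
    intro j _
    have hxj : xk1 j = τ * zk j + (1 - τ) * yk j := by
      rw [hx]; simp [Pi.add_apply, Pi.smul_apply, smul_eq_mul]
    field_simp
    linear_combination (-(g j)) * hxj
  have hgi : ∀ i, coordGrad f xk1 i = g i := fun i => rfl
  have hW0 : ∀ v : Fin n → ℝ, 0 ≤ wnormSq L β v := fun v =>
    Finset.sum_nonneg fun j _ => mul_nonneg (hLβ j).le (sq_nonneg _)
  have hA : f xk1 - f yk ≤ ∑ i, g i * (xk1 i - yk i) := by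
    have h := hsc xk1 yk
    simp only [hgi] at h
    have e : ∑ i, g i * (yk i - xk1 i) = - ∑ i, g i * (xk1 i - yk i) := by
      rw [← Finset.sum_neg_distrib]
      apply Finset.sum_congr rfl
      intros; ring
    have hw := hW0 (yk - xk1)
    rw [e] at h
    nlinarith [h, hw, hσ]
  have hWsym : wnormSq L β (xstar - xk1) = wnormSq L β (xk1 - xstar) := by
    apply Finset.sum_congr rfl
    intro j _
    simp only [Pi.sub_apply]
    ring
  have hB : f xk1 - f xstar + σβ / 2 * wnormSq L β (xk1 - xstar)
      ≤ ∑ i, g i * (xk1 i - xstar i) := by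
    have h := hsc xk1 xstar
    simp only [hgi] at h
    have e : ∑ i, g i * (xstar i - xk1 i) = - ∑ i, g i * (xk1 i - xstar i) := by
      rw [← Finset.sum_neg_distrib]
      apply Finset.sum_congr rfl
      intros; ring
    rw [e, hWsym] at h
    linarith [h]
  -- final assembly
  have hPF : ∑ i, p i * (f (Y i) - f xstar) = (∑ i, p i * f (Y i)) - f xstar := by
    simp only [mul_sub]
    rw [Finset.sum_sub_distrib, ← Finset.sum_mul, hsum1, one_mul]
  rw [hPF]
  exact assemble η τ σβ s (wnormSq L β (zk - xstar)) (wnormSq L β (xk1 - xstar))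
    (∑ i, p i * wnormSq L β (Z i - xstar)) (∑ i, g i * (zk i - xstar i))
    (∑ i, g i * (xk1 i - yk i)) (∑ i, g i * (xk1 i - xstar i))
    (∑ i, p i * f (Y i)) (f yk) (f xstar) (f xk1)
    hη0 hτ0 hτ1 hsdef main hGdec hA hB
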